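/- Let I ≥ 2 and p ≥ 1 be integers, and consider the one-shot game in which player i ∈ {1,…,I} chooses u_i ∈ ℝ to minimize J_i(u) = r_i·u_i^(2p) + α_i·(s + Σ_{j=1}^I b_j·u_j)^(2p), where s ∈ ℝ and r_i > 0, α_i > 0, b_i > 0 for all i. For each i set κ_i = (α_i·b_i/r_i)^(1/(2p−1)) > 0 and c_i = κ_i/(1 + κ_i·b_i), and let E be the I×I matrix with E_{ii} = 1 and E_{ij} = c_i·b_j for i ≠ j. Then u* ∈ ℝ^I is a Nash equilibrium (i.e., for every i and every v ∈ ℝ, J_i(u*) ≤ J_i(u*_1,…,u*_{i−1}, v, u*_{i+1},…,u*_I)) if and only if E·u* = −s·c. In particular, if E is invertible, the unique Nash equilibrium is u*_i = −(E⁻¹·c)_i·s. -/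
import Mathlib


open Set

/-- Tangent line inequality for even powers. -/
lemma even_pow_tangent {n : ℕ} (hn : Even n) (x y : ℝ) :
    y ^ n + n * y ^ (n - 1) * (x - y) ≤ x ^ n := by
  rcases lt_trichotomy x y with h | h | h
  · have hs := (hn.convexOn_pow (𝕜 := ℝ)).slope_le_of_hasDerivAt (mem_univ x) (mem_univ y) h
      (hasDerivAt_pow n y)
    rw [slope_def_field] at hs
    have hyx : 0 < y - x := by linarith
    have := (div_le_iff₀ hyx).mp hs
    nlinarith
  · simp [h]
  · have hs := (hn.convexOn_pow (𝕜 := ℝ)).le_slope_of_hasDerivAt (mem_univ y) (mem_univ x)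
      h (hasDerivAt_pow n y)
    rw [slope_def_field] at hs
    have hxy : 0 < x - y := by linarith
    have := (le_div_iff₀ hxy).mp hs
    nlinarith

/-- Characterization of the global minimum of `v ↦ R v^n + A (a0 + B v)^n` for even `n ≥ 1`. -/
lemma min_iff_stationary {n : ℕ} (hn : Even n) (hn1 : 1 ≤ n) (R A B a0 : ℝ)
    (hR : 0 ≤ R) (hA : 0 ≤ A) (u : ℝ) :
    (∀ v : ℝ, R * u ^ n + A * (a0 + B * u) ^ n ≤ R * v ^ n + A * (a0 + B * v) ^ n)
      ↔ R * u ^ (n - 1) + A * B * (a0 + B * u) ^ (n - 1) = 0 := by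
  have hnpos : (0 : ℝ) < n := by exact_mod_cast hn1
  constructor
  · intro h
    have hloc : IsLocalMin (fun v : ℝ => R * v ^ n + A * (a0 + B * v) ^ n) u :=
      Filter.Eventually.of_forall h
    have hd1 : HasDerivAt (fun v : ℝ => R * v ^ n) (R * (n * u ^ (n - 1))) u :=
      (hasDerivAt_pow n u).const_mul R
    have hd2 : HasDerivAt (fun v : ℝ => a0 + B * v) B u := by
      simpa using ((hasDerivAt_id u).const_mul B).const_add a0
    have hd3 : HasDerivAt (fun v : ℝ => (a0 + B * v) ^ n)
        ((n * (a0 + B * u) ^ (n - 1)) * B) u := by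
      exact HasDerivAt.comp u (hasDerivAt_pow n (a0 + B * u)) hd2
    have hd : HasDerivAt (fun v : ℝ => R * v ^ n + A * (a0 + B * v) ^ n)
        (R * (n * u ^ (n - 1)) + A * ((n * (a0 + B * u) ^ (n - 1)) * B)) u :=
      hd1.add (hd3.const_mul A)
    have h0 := hloc.hasDerivAt_eq_zero hd
    have : (n : ℝ) * (R * u ^ (n - 1) + A * B * (a0 + B * u) ^ (n - 1)) = 0 := by
      rw [← h0]; ring
    rcases mul_eq_zero.mp this with h' | h'
    · exact absurd h' (ne_of_gt hnpos)
    · exact h'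
  · intro h v
    have h1 := even_pow_tangent hn v u
    have h2 := even_pow_tangent hn (a0 + B * v) (a0 + B * u)
    have h1' := mul_le_mul_of_nonneg_left h1 hR
    have h2' := mul_le_mul_of_nonneg_left h2 hA
    have hz : (n : ℝ) * (v - u) * (R * u ^ (n - 1) + A * B * (a0 + B * u) ^ (n - 1)) = 0 := by
      rw [h]; ring
    nlinarith [h1', h2', hz]


/-- One-shot 2p-order game: `u*` is a Nash equilibrium of the game with costs
`J_i(u) = r_i·u_i^(2p) + α_i·(s + Σ_j b_j·u_j)^(2p)` iff `E·u* = −s·c`, where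
`κ_i^(2p−1) = α_i·b_i/r_i`, `c_i = κ_i/(1 + κ_i·b_i)`, and `E` has unit diagonal and
off-diagonal entries `c_i·b_j`. If `E` is invertible, the unique Nash equilibrium is
`u*_i = −(E⁻¹·c)_i·s`. -/
theorem one_shot_game_nash (I p : ℕ) (hI : 2 ≤ I) (hp : 1 ≤ p) (s : ℝ)
    (r α b : Fin I → ℝ) (hr : ∀ i, 0 < r i) (hα : ∀ i, 0 < α i) (hb : ∀ i, 0 < b i)
    (κ : Fin I → ℝ) (hκ : ∀ i, κ i ^ (2 * p - 1) = α i * b i / r i)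
    (c : Fin I → ℝ) (hc : ∀ i, c i = κ i / (1 + κ i * b i))
    (E : Matrix (Fin I) (Fin I) ℝ)
    (hEd : ∀ i, E i i = 1) (hEo : ∀ i j, i ≠ j → E i j = c i * b j)
    (ustar : Fin I → ℝ) :
    ((∀ i, ∀ v : ℝ,
        r i * ustar i ^ (2 * p) + α i * (s + ∑ j, b j * ustar j) ^ (2 * p)
          ≤ r i * v ^ (2 * p)
              + α i * (s + ∑ j, b j * Function.update ustar i v j) ^ (2 * p))
        ↔ E.mulVec ustar = -s • c) ∧
    (IsUnit E →
      ((∀ i, ∀ v : ℝ,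
          r i * ustar i ^ (2 * p) + α i * (s + ∑ j, b j * ustar j) ^ (2 * p)
            ≤ r i * v ^ (2 * p)
                + α i * (s + ∑ j, b j * Function.update ustar i v j) ^ (2 * p))
          ↔ ∀ i, ustar i = -(E⁻¹.mulVec c i) * s)) := by
  have hev : Even (2 * p) := even_two_mul p
  have hn1 : 1 ≤ 2 * p := by omega
  have hodd : Odd (2 * p - 1) := ⟨p - 1, by omega⟩
  have hκpos : ∀ i, 0 < κ i := by
    intro i
    refine (Odd.pow_pos_iff hodd).mp ?_
    rw [hκ i]
    exact div_pos (mul_pos (hα i) (hb i)) (hr i)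
  have hden : ∀ i, 0 < 1 + κ i * b i := fun i => by nlinarith [hκpos i, hb i]
  -- partial sums
  set S : Fin I → ℝ := fun i => ∑ j ∈ Finset.univ.erase i, b j * ustar j with hS
  have hTsum : ∀ i, s + ∑ j, b j * ustar j = (s + S i) + b i * ustar i := by
    intro i
    rw [hS]
    have := Finset.sum_erase_add Finset.univ (fun j => b j * ustar j) (Finset.mem_univ i)
    simp only [← this]
    ring
  have hupd : ∀ i (v : ℝ), s + ∑ j, b j * Function.update ustar i v j = (s + S i) + b i * v := by
    intro i v
    have := Finset.sum_erase_add Finset.univ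
      (fun j => b j * Function.update ustar i v j) (Finset.mem_univ i)
    rw [← this]
    simp only [Function.update_self]
    have herase : ∑ j ∈ Finset.univ.erase i, b j * Function.update ustar i v j = S i := by
      apply Finset.sum_congr rfl
      intro j hj
      rw [Function.update_of_ne (Finset.ne_of_mem_erase hj)]
    rw [herase]; ring
  -- per-player characterization
  have hchar : ∀ i,
      (∀ v : ℝ, r i * ustar i ^ (2 * p) + α i * (s + ∑ j, b j * ustar j) ^ (2 * p)
          ≤ r i * v ^ (2 * p)
              + α i * (s + ∑ j, b j * Function.update ustar i v j) ^ (2 * p))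
        ↔ ustar i + c i * S i = -s * c i := by
    intro i
    have hmin : (∀ v : ℝ, r i * ustar i ^ (2 * p) + α i * (s + ∑ j, b j * ustar j) ^ (2 * p)
          ≤ r i * v ^ (2 * p)
              + α i * (s + ∑ j, b j * Function.update ustar i v j) ^ (2 * p))
        ↔ r i * ustar i ^ (2 * p - 1)
            + α i * b i * ((s + S i) + b i * ustar i) ^ (2 * p - 1) = 0 := by
      rw [show (∀ v : ℝ, r i * ustar i ^ (2 * p) + α i * (s + ∑ j, b j * ustar j) ^ (2 * p)
          ≤ r i * v ^ (2 * p)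
              + α i * (s + ∑ j, b j * Function.update ustar i v j) ^ (2 * p))
        ↔ (∀ v : ℝ, r i * ustar i ^ (2 * p) + α i * ((s + S i) + b i * ustar i) ^ (2 * p)
          ≤ r i * v ^ (2 * p) + α i * ((s + S i) + b i * v) ^ (2 * p)) from by
          constructor <;> intro h v <;>
            [(rw [← hTsum i]; have := h v; rwa [hupd i v] at this);
             (rw [hTsum i]; have := h v; rwa [← hupd i v] at this)]]
      exact min_iff_stationary hev hn1 (r i) (α i) (b i) (s + S i)
        (le_of_lt (hr i)) (le_of_lt (hα i)) (ustar i)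
    rw [hmin]
    set T : ℝ := (s + S i) + b i * ustar i with hT
    constructor
    · intro h
      -- derive ustar i = -(κ i * T)
      have hr0 : r i ≠ 0 := ne_of_gt (hr i)
      have hpow : ustar i ^ (2 * p - 1) = (κ i * (-T)) ^ (2 * p - 1) := by
        rw [mul_pow, Odd.neg_pow hodd, hκ i, div_mul_eq_mul_div, eq_div_iff hr0]
        linear_combination h
      have hu : ustar i = κ i * (-T) := (hodd.strictMono_pow (R := ℝ)).injective hpow
      have key : ustar i * (1 + κ i * b i) = -(κ i * (s + S i)) := by
        rw [hT] at hu; linear_combination hu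
      have hci : ustar i = -(c i * (s + S i)) := by
        rw [hc, div_mul_eq_mul_div, ← neg_div, eq_div_iff (ne_of_gt (hden i))]
        linear_combination key
      linear_combination hci
    · intro h
      have hd0 : (1 + κ i * b i) ≠ 0 := ne_of_gt (hden i)
      have key : ustar i * (1 + κ i * b i) = -(κ i * (s + S i)) := by
        have h' := h
        rw [hc] at h'
        field_simp at h'
        linear_combination h'
      have hu : ustar i = κ i * (-T) := by rw [hT]; linear_combination key
      have hrw : ustar i ^ (2 * p - 1) = -(α i * b i / r i * T ^ (2 * p - 1)) := by
        rw [hu, mul_pow, Odd.neg_pow hodd, hκ i]; ring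
      have hr0' : r i ≠ 0 := ne_of_gt (hr i)
      rw [hrw]
      field_simp
      ring
  -- matrix form
  have hmv : ∀ i, E.mulVec ustar i = ustar i + c i * S i := by
    intro i
    have : E.mulVec ustar i = ∑ j, E i j * ustar j := rfl
    rw [this, ← Finset.sum_erase_add Finset.univ _ (Finset.mem_univ i), hEd i]
    have herase : ∑ j ∈ Finset.univ.erase i, E i j * ustar j = c i * S i := by
      rw [hS, Finset.mul_sum]
      apply Finset.sum_congr rfl
      intro j hj
      rw [hEo i j (Ne.symm (Finset.ne_of_mem_erase hj))]
      ring
    rw [herase]; ring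
  have hmain : (∀ i, ∀ v : ℝ,
        r i * ustar i ^ (2 * p) + α i * (s + ∑ j, b j * ustar j) ^ (2 * p)
          ≤ r i * v ^ (2 * p)
              + α i * (s + ∑ j, b j * Function.update ustar i v j) ^ (2 * p))
        ↔ E.mulVec ustar = -s • c := by
    rw [funext_iff]
    constructor
    · intro h i
      rw [hmv i, Pi.smul_apply, smul_eq_mul]
      have := (hchar i).mp (h i)
      linarith
    · intro h i
      refine (hchar i).mpr ?_
      have := h i
      rw [hmv i, Pi.smul_apply, smul_eq_mul] at this
      linarith
  refine ⟨hmain, fun hE => ?_⟩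
  rw [hmain]
  have hdet : IsUnit E.det := E.isUnit_iff_isUnit_det.mp hE
  constructor
  · intro h i
    have : E⁻¹.mulVec (E.mulVec ustar) = E⁻¹.mulVec (-s • c) := by rw [h]
    rw [Matrix.mulVec_mulVec, Matrix.nonsing_inv_mul E hdet, Matrix.one_mulVec,
      Matrix.mulVec_smul] at this
    rw [this, Pi.smul_apply, smul_eq_mul]
    ring
  · intro h
    have hu : ustar = -s • E⁻¹.mulVec c := by
      funext i
      rw [h i, Pi.smul_apply, smul_eq_mul]
      ring
    rw [hu, Matrix.mulVec_smul, Matrix.mulVec_mulVec, Matrix.mul_nonsing_inv E hdet,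
      Matrix.one_mulVec]
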